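/- Let f be a Schwartz function on ℝⁿ. For every nonnegative integer k and every unit vector u, the moment ∫_ℝ f̂(u,s) s^k ds equals P_k(u), where P_k(y) = ∫_{ℝⁿ} f(x) ⟨x,y⟩^k dx is (the restriction to the sphere of) a homogeneous polynomial of degree k in y. -/

import Mathlib

open MeasureTheory
open scoped RealInnerProductSpace

/-- The hyperplane Radon transform `f̂(u,s) = ∫_{⟪x,u⟫=s} f dσ`. -/
noncomputable def radonTransform {n : ℕ} (f : EuclideanSpace ℝ (Fin n) → ℂ)
    (u : EuclideanSpace ℝ (Fin n)) (s : ℝ) : ℂ :=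
  ∫ v : ((ℝ ∙ u)ᗮ : Submodule ℝ (EuclideanSpace ℝ (Fin n))), f (s • u + (v : EuclideanSpace ℝ (Fin n)))

/-- `P_k(y) = ∫ f(x) ⟪x,y⟫^k dx`, a homogeneous polynomial of degree `k` in `y`. -/
noncomputable def momentPoly {n : ℕ} (f : EuclideanSpace ℝ (Fin n) → ℂ) (k : ℕ)
    (y : EuclideanSpace ℝ (Fin n)) : ℂ :=
  ∫ x : EuclideanSpace ℝ (Fin n), f x * ((⟪x, y⟫ : ℝ) : ℂ) ^ k

lemma measurePreserving_slice {n : ℕ} (u : EuclideanSpace ℝ (Fin n)) (hu : ‖u‖ = 1) :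
    MeasurePreserving
      (fun p : ℝ × ((ℝ ∙ u)ᗮ : Submodule ℝ (EuclideanSpace ℝ (Fin n))) =>
        p.1 • u + (p.2 : EuclideanSpace ℝ (Fin n)))
      (volume.prod volume) volume := by
  classical
  set F : Submodule ℝ (EuclideanSpace ℝ (Fin n)) := (ℝ ∙ u)ᗮ with hFdef
  set m : ℕ := Module.finrank ℝ F with hm
  set c : OrthonormalBasis (Fin m) ℝ F := stdOrthonormalBasis ℝ F with hc
  set v : Fin (m + 1) → EuclideanSpace ℝ (Fin n) := Fin.cons u (fun i => (c i : EuclideanSpace ℝ (Fin n))) with hv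
  have hon : Orthonormal ℝ v := by
    rw [orthonormal_iff_ite]
    intro i j
    induction i using Fin.cases with
    | zero =>
      induction j using Fin.cases with
      | zero =>
        simp only [hv, Fin.cons_zero]
        rw [if_pos trivial, real_inner_self_eq_norm_mul_norm, hu, mul_one]
      | succ j =>
        have hj : ((c j : EuclideanSpace ℝ (Fin n))) ∈ F := (c j).2
        have h0 : ⟪u, (c j : EuclideanSpace ℝ (Fin n))⟫ = 0 :=
          (Submodule.mem_orthogonal _ _).1 hj u (Submodule.mem_span_singleton_self u)
        simp only [hv, Fin.cons_zero, Fin.cons_succ]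
        rw [if_neg (Fin.succ_ne_zero j).symm]
        exact h0
    | succ i =>
      induction j using Fin.cases with
      | zero =>
        have hi : ((c i : EuclideanSpace ℝ (Fin n))) ∈ F := (c i).2
        have h0 : ⟪u, (c i : EuclideanSpace ℝ (Fin n))⟫ = 0 :=
          (Submodule.mem_orthogonal _ _).1 hi u (Submodule.mem_span_singleton_self u)
        simp only [hv, Fin.cons_zero, Fin.cons_succ]
        rw [if_neg (Fin.succ_ne_zero i), real_inner_comm]
        exact h0
      | succ j =>
        have h0 := (orthonormal_iff_ite.1 c.orthonormal) i j
        rw [Submodule.coe_inner] at h0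
        simp only [hv, Fin.cons_succ, Fin.succ_inj]
        exact h0
  have hsp : ⊤ ≤ Submodule.span ℝ (Set.range v) := by
    rw [← Submodule.sup_orthogonal_of_hasOrthogonalProjection (K := ℝ ∙ u)]
    apply sup_le
    · rw [Submodule.span_singleton_le_iff_mem]
      exact Submodule.subset_span ⟨0, by simp [hv]⟩
    · have h1 : Submodule.span ℝ (Set.range fun i => (c i : EuclideanSpace ℝ (Fin n))) = F := by
        rw [show (Set.range fun i => (c i : EuclideanSpace ℝ (Fin n))) = F.subtype '' Set.range c by
          rw [← Set.range_comp]; rfl]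
        rw [← Submodule.map_span, ← c.coe_toBasis, c.toBasis.span_eq, Submodule.map_top,
          Submodule.range_subtype]
      rw [← hFdef, ← h1]
      refine Submodule.span_mono ?_
      rintro x ⟨i, rfl⟩
      exact ⟨i.succ, by simp [hv]⟩
  set B : OrthonormalBasis (Fin (m + 1)) ℝ (EuclideanSpace ℝ (Fin n)) :=
    OrthonormalBasis.mk hon hsp with hB
  have hBcoe : ⇑B = v := OrthonormalBasis.coe_mk hon hsp
  have h1 : MeasurePreserving
      (Prod.map (fun s : ℝ => s)
        ((fun w : EuclideanSpace ℝ (Fin m) => (WithLp.equiv 2 (Fin m → ℝ)) w) ∘ ⇑c.repr))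
      (volume.prod volume) (volume.prod volume) :=
    (MeasurePreserving.id volume).prod
      ((PiLp.volume_preserving_ofLp (Fin m)).comp c.measurePreserving_repr)
  have h2 : MeasurePreserving
      (⇑(MeasurableEquiv.piFinSuccAbove (fun _ : Fin (m + 1) => ℝ) 0).symm)
      (volume.prod volume) volume :=
    (volume_preserving_piFinSuccAbove (fun _ : Fin (m + 1) => ℝ) 0).symm
  have h3 : MeasurePreserving (⇑(WithLp.equiv 2 (Fin (m+1) → ℝ)).symm) volume volume :=
    PiLp.volume_preserving_toLp (Fin (m + 1))
  have h4 : MeasurePreserving (⇑B.repr.symm) volume volume :=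
    B.measurePreserving_repr_symm
  have hcomp := (h4.comp (h3.comp (h2.comp h1)))
  have hfun : (⇑B.repr.symm ∘ ⇑(WithLp.equiv 2 (Fin (m+1) → ℝ)).symm ∘
      ⇑(MeasurableEquiv.piFinSuccAbove (fun _ : Fin (m + 1) => ℝ) 0).symm ∘
      Prod.map (fun s : ℝ => s)
        ((fun w : EuclideanSpace ℝ (Fin m) => (WithLp.equiv 2 (Fin m → ℝ)) w) ∘ ⇑c.repr)) =
      fun p : ℝ × F => p.1 • u + (p.2 : EuclideanSpace ℝ (Fin n)) := by
    funext p
    obtain ⟨s, w⟩ := p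
    show B.repr.symm ((WithLp.equiv 2 (Fin (m+1) → ℝ)).symm
        ((Fin.insertNthEquiv (fun _ : Fin (m + 1) => ℝ) 0) (s, fun i => c.repr w i)))
      = s • u + (w : EuclideanSpace ℝ (Fin n))
    have hins : (Fin.insertNthEquiv (fun _ : Fin (m + 1) => ℝ) 0) (s, fun i => c.repr w i)
        = Fin.insertNth 0 s (fun i => c.repr w i) := rfl
    rw [hins, ← B.sum_repr_symm]
    have hw : w = c.repr.symm (c.repr w) := (c.repr.symm_apply_apply w).symm
    rw [show ((w : EuclideanSpace ℝ (Fin n))) = ((c.repr.symm (c.repr w) : F) : EuclideanSpace ℝ (Fin n)) by rw [← hw]]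
    rw [← c.sum_repr_symm]
    simp only [WithLp.equiv_symm_apply, PiLp.toLp_apply, Fin.sum_univ_succ, Fin.insertNth_apply_same,
      hBcoe, hv, Fin.cons_zero, Fin.cons_succ, ← Fin.zero_succAbove, Fin.insertNth_apply_succAbove]
    rw [Submodule.coe_sum]
    simp
  rw [hfun] at hcomp
  exact hcomp

/-- **Helgason moment condition**: for a Schwartz function `f` on `ℝⁿ`, every nonnegative
integer `k` and every unit vector `u`, the moment `∫_ℝ f̂(u,s) s^k ds` equals `P_k(u)`,
where `P_k(y) = ∫ f(x) ⟪x,y⟫^k dx` is homogeneous of degree `k`. -/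
theorem radon_moment_condition {n : ℕ} (f : SchwartzMap (EuclideanSpace ℝ (Fin n)) ℂ)
    (k : ℕ) (u : EuclideanSpace ℝ (Fin n)) (hu : ‖u‖ = 1) :
    (∫ s : ℝ, radonTransform (fun x => f x) u s * (s : ℂ) ^ k) = momentPoly (fun x => f x) k u
      ∧ ∀ (c : ℝ) (y : EuclideanSpace ℝ (Fin n)),
        momentPoly (fun x => f x) k (c • y) = (c : ℂ) ^ k * momentPoly (fun x => f x) k y := by
  constructor
  · set F : Submodule ℝ (EuclideanSpace ℝ (Fin n)) := (ℝ ∙ u)ᗮ with hFdef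
    set g : EuclideanSpace ℝ (Fin n) → ℂ := fun x => f x * ((⟪x, u⟫ : ℝ) : ℂ) ^ k with hg
    have hΦ := measurePreserving_slice u hu
    have hgc : Continuous g := f.continuous.mul ((Complex.continuous_ofReal.comp
      (continuous_id.inner continuous_const)).pow k)
    have hgint : Integrable g volume := by
      refine (f.integrable_pow_mul volume k).mono' hgc.aestronglyMeasurable ?_
      filter_upwards with x
      rw [hg]
      simp only [norm_mul, norm_pow, Complex.norm_real]
      calc ‖f x‖ * ‖⟪x, u⟫‖ ^ k ≤ ‖f x‖ * ‖x‖ ^ k := by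
            gcongr
            calc ‖⟪x, u⟫‖ = |⟪x, u⟫| := rfl
              _ ≤ ‖x‖ * ‖u‖ := abs_real_inner_le_norm x u
              _ = ‖x‖ := by rw [hu, mul_one]
        _ = ‖x‖ ^ k * ‖f x‖ := mul_comm _ _
    have hinner : ∀ (s : ℝ) (w : F), ⟪s • u + (w : EuclideanSpace ℝ (Fin n)), u⟫ = s := by
      intro s w
      have hw : ⟪(w : EuclideanSpace ℝ (Fin n)), u⟫ = 0 :=
        (Submodule.mem_orthogonal' _ _).1 w.2 u (Submodule.mem_span_singleton_self u)
      rw [inner_add_left, real_inner_smul_left, hw, real_inner_self_eq_norm_mul_norm, hu]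
      ring
    have hcomp_int : Integrable
        (fun p : ℝ × F => g (p.1 • u + (p.2 : EuclideanSpace ℝ (Fin n))))
        (volume.prod volume) := by
      have h := (integrable_map_measure
        (by rw [hΦ.map_eq]; exact hgc.aestronglyMeasurable)
        hΦ.measurable.aemeasurable).1 (by rw [hΦ.map_eq]; exact hgint)
      exact h
    have hmain : (∫ p : ℝ × F, g (p.1 • u + (p.2 : EuclideanSpace ℝ (Fin n)))
        ∂(volume.prod volume)) = ∫ x, g x := by
      calc (∫ p : ℝ × F, g (p.1 • u + (p.2 : EuclideanSpace ℝ (Fin n))) ∂(volume.prod volume))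
          = ∫ x, g x ∂(Measure.map (fun p : ℝ × F =>
              p.1 • u + (p.2 : EuclideanSpace ℝ (Fin n))) (volume.prod volume)) :=
            (integral_map hΦ.measurable.aemeasurable
              (by rw [hΦ.map_eq]; exact hgc.aestronglyMeasurable)).symm
        _ = ∫ x, g x := by rw [hΦ.map_eq]
    rw [integral_prod _ hcomp_int] at hmain
    have hrad : ∀ s : ℝ, radonTransform (fun x => f x) u s * (s : ℂ) ^ k
        = ∫ w : F, g (s • u + (w : EuclideanSpace ℝ (Fin n))) := by
      intro s
      rw [radonTransform, ← integral_mul_const]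
      congr 1
      funext w
      rw [hg]
      simp only
      rw [hinner s w]
    calc (∫ s : ℝ, radonTransform (fun x => f x) u s * (s : ℂ) ^ k)
        = ∫ s : ℝ, ∫ w : F, g (s • u + (w : EuclideanSpace ℝ (Fin n))) := by
          simp_rw [hrad]
      _ = ∫ x, g x := hmain
      _ = momentPoly (fun x => f x) k u := rfl
  · intro c y
    unfold momentPoly
    rw [← integral_const_mul]
    congr 1
    funext x
    rw [real_inner_smul_right]
    push_cast
    ring
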